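/- Let G be a finite connected simple graph and let C be a vertex cover of G. If (𝒜, ℬ) is a bipartition of the set of connected components of the subgraph induced by C with 𝒜 ≠ ∅ and ℬ ≠ ∅, then there exist a component A ∈ 𝒜 and a component B ∈ ℬ such that the distance in G between the vertex set of A and the vertex set of B is exactly 2 (the distance between two vertex sets being the minimum over all pairs of the graph distance). -/

import Mathlib

open SimpleGraph

/-- `C` is a vertex cover of `G`: every edge of `G` has an endpoint in `C`. -/
def IsVertexCover {V : Type} (G : SimpleGraph V) (C : Set V) : Prop :=
  ∀ ⦃u v : V⦄, G.Adj u v → u ∈ C ∨ v ∈ C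

/-- `C` is a connected vertex cover of `G`: a vertex cover inducing a connected subgraph. -/
def IsConnectedVertexCover {V : Type} (G : SimpleGraph V) (C : Set V) : Prop :=
  _root_.IsVertexCover G C ∧ (G.induce C).Connected

/-- The vertex cover number `τ(G)`. -/
noncomputable def tau {V : Type} (G : SimpleGraph V) : ℕ :=
  sInf {n | ∃ C : Set V, _root_.IsVertexCover G C ∧ C.ncard = n}

/-- The connected vertex cover number `τ_c(G)`. -/
noncomputable def tauc {V : Type} (G : SimpleGraph V) : ℕ :=
  sInf {n | ∃ C : Set V, IsConnectedVertexCover G C ∧ C.ncard = n}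

/-- If `(𝒜, ℬ)` is a bipartition of the connected components of the subgraph of `G`
induced by a vertex cover `C`, with both parts nonempty, then some component in `𝒜`
and some component in `ℬ` are at distance exactly `2` in `G` (distance between
vertex sets being the minimum of the pairwise graph distances). -/
theorem components_at_distance_two {V : Type} [Fintype V] (G : SimpleGraph V)
    (hconn : G.Connected) (C : Set V) (hC : _root_.IsVertexCover G C)
    (𝒜 ℬ : Set ((G.induce C).ConnectedComponent))
    (hunion : 𝒜 ∪ ℬ = Set.univ) (hdisj : 𝒜 ∩ ℬ = ∅)
    (hA : 𝒜.Nonempty) (hB : ℬ.Nonempty) :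
    ∃ A ∈ 𝒜, ∃ B ∈ ℬ,
      sInf {d : ℕ | ∃ a ∈ Subtype.val '' A.supp, ∃ b ∈ Subtype.val '' B.supp,
        d = G.dist a b} = 2 := by
  classical
  -- key lower bound: vertices in different components of induce C are at distance ≥ 2
  have key : ∀ (A B : (G.induce C).ConnectedComponent), A ≠ B →
      ∀ a : C, a ∈ A.supp → ∀ b : C, b ∈ B.supp → 2 ≤ G.dist a.val b.val := by
    intro A B hne a ha b hb
    rw [ConnectedComponent.mem_supp_iff] at ha hb
    by_contra h
    push_neg at h
    interval_cases hd : (G.dist a.val b.val)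
    · have := (hconn.dist_eq_zero_iff).mp hd
      apply hne
      rw [← ha, ← hb]
      congr 1
      exact Subtype.ext this
    · have hadj : G.Adj a.val b.val := dist_eq_one_iff_adj.mp hd
      have hadj' : (G.induce C).Adj a b := hadj
      apply hne
      rw [← ha, ← hb]
      exact ConnectedComponent.sound hadj'.reachable
  set D : Set ℕ := {d | ∃ A ∈ 𝒜, ∃ B ∈ ℬ, ∃ a ∈ A.supp, ∃ b ∈ B.supp,
    d = G.dist a.val b.val} with hD
  obtain ⟨A0, hA0⟩ := hA
  obtain ⟨B0, hB0⟩ := hB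
  obtain ⟨a0, ha0⟩ := A0.exists_rep
  obtain ⟨b0, hb0⟩ := B0.exists_rep
  have hDne : D.Nonempty :=
    ⟨_, A0, hA0, B0, hB0, a0, (ConnectedComponent.mem_supp_iff _ _).mpr ha0,
      b0, (ConnectedComponent.mem_supp_iff _ _).mpr hb0, rfl⟩
  obtain ⟨A, hAmem, B, hBmem, a, ha, b, hb, hd⟩ := Nat.sInf_mem hDne
  have hAB : A ≠ B := by
    intro h
    have : A ∈ 𝒜 ∩ ℬ := ⟨hAmem, h ▸ hBmem⟩
    rw [hdisj] at this
    exact this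
  have h2 : 2 ≤ sInf D := hd ▸ key A B hAB a ha b hb
  have hreach := hconn a.val b.val
  obtain ⟨x, hgx⟩ : ∃ x, (a : V) = x := ⟨_, rfl⟩
  obtain ⟨y, hgy⟩ : ∃ y, (b : V) = y := ⟨_, rfl⟩
  rw [hgx, hgy] at hreach
  obtain ⟨p, hp⟩ := hreach.exists_walk_length_eq_dist
  replace hp : p.length = sInf D := by rw [hp, ← hgx, ← hgy]; exact hd.symm
  cases p with
  | nil => simp at hp; omega
  | @cons _ v1 _ h1 p' =>
    subst hgx
    subst hgy
    have hv1 : v1 ∉ C := by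
      intro hv1C
      have hmem : (⟨v1, hv1C⟩ : C) ∈ A.supp := by
        rw [ConnectedComponent.mem_supp_iff, ← (ConnectedComponent.mem_supp_iff _ _).mp ha]
        exact (ConnectedComponent.sound
          (show (G.induce C).Adj ⟨v1, hv1C⟩ a from h1.symm).reachable)
      have hle : G.dist v1 b.val ≤ p'.length := dist_le p'
      have hsle : sInf D ≤ G.dist v1 b.val :=
        Nat.sInf_le ⟨A, hAmem, B, hBmem, ⟨v1, hv1C⟩, hmem, b, hb, rfl⟩
      simp only [Walk.length_cons] at hp
      omega
    cases p' with
    | nil => exact absurd b.2 hv1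
    | @cons _ v2 _ h2' p'' =>
      have hv2C : v2 ∈ C := (hC h2').resolve_left hv1
      set K := (G.induce C).connectedComponentMk ⟨v2, hv2C⟩ with hK
      have hKmem : K ∈ 𝒜 ∪ ℬ := hunion ▸ Set.mem_univ K
      have hv2supp : (⟨v2, hv2C⟩ : C) ∈ K.supp := (ConnectedComponent.mem_supp_iff _ _).mpr rfl
      cases hKmem with
      | inl hK𝒜 =>
        exfalso
        have hle : G.dist v2 b.val ≤ p''.length := dist_le p''
        have hsle : sInf D ≤ G.dist v2 b.val :=
          Nat.sInf_le ⟨K, hK𝒜, B, hBmem, ⟨v2, hv2C⟩, hv2supp, b, hb, rfl⟩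
        simp only [Walk.length_cons] at hp
        omega
      | inr hKℬ =>
        refine ⟨A, hAmem, K, hKℬ, ?_⟩
        have hAK : A ≠ K := by
          intro h
          have : A ∈ 𝒜 ∩ ℬ := ⟨hAmem, h ▸ hKℬ⟩
          rw [hdisj] at this
          exact this
        have hdav2 : G.dist a.val v2 = 2 := by
          have hle : G.dist a.val v2 ≤ 2 := by
            have := dist_le (Walk.cons h1 (Walk.cons h2' Walk.nil))
            simpa using this
          exact le_antisymm hle (key A K hAK a ha ⟨v2, hv2C⟩ hv2supp)
        have hmem2 : (2 : ℕ) ∈ {d : ℕ | ∃ x ∈ Subtype.val '' A.supp,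
            ∃ y ∈ Subtype.val '' K.supp, d = G.dist x y} :=
          ⟨a.val, ⟨a, ha, rfl⟩, v2, ⟨⟨v2, hv2C⟩, hv2supp, rfl⟩, hdav2.symm⟩
        refine le_antisymm (Nat.sInf_le hmem2) (le_csInf ⟨2, hmem2⟩ ?_)
        rintro d ⟨x, ⟨x', hx', rfl⟩, y, ⟨y', hy', rfl⟩, rfl⟩
        exact key A K hAK x' hx' y' hy'
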